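/- The χ-canonical F-interpreted system for JTO_CS is indeed an F-interpreted system for JTO_CS: each canonical R_i is reflexive and transitive, each canonical R^O_i is shift reflexive, the canonical E_i satisfies monotonicity, constant specification, application and positive introspection, and the canonical E^O_i satisfies constant specification, application, consistency and obligated factivity. -/

import Mathlib

namespace JTO

/-- Epistemic justification terms. -/
inductive TmE (Const Var : Type) : Type
  | const : Const → TmE Const Var
  | var   : Var → TmE Const Var
  | bang  : TmE Const Var → TmE Const Var
  | plus  : TmE Const Var → TmE Const Var → TmE Const Var
  | times : TmE Const Var → TmE Const Var → TmE Const Var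

/-- Deontic (normative) justification terms. -/
inductive TmO (Const Var : Type) : Type
  | const : Const → TmO Const Var
  | var   : Var → TmO Const Var
  | ddag  : TmO Const Var → TmO Const Var
  | times : TmO Const Var → TmO Const Var → TmO Const Var

/-- Formulas of the logic JTO. -/
inductive Fm (Ag Const Var Atom : Type) : Type
  | atom  : Atom → Fm Ag Const Var Atom
  | bot   : Fm Ag Const Var Atom
  | imp   : Fm Ag Const Var Atom → Fm Ag Const Var Atom → Fm Ag Const Var Atom
  | next  : Fm Ag Const Var Atom → Fm Ag Const Var Atom
  | wprev : Fm Ag Const Var Atom → Fm Ag Const Var Atom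
  | untl  : Fm Ag Const Var Atom → Fm Ag Const Var Atom → Fm Ag Const Var Atom
  | snce  : Fm Ag Const Var Atom → Fm Ag Const Var Atom → Fm Ag Const Var Atom
  | jbox  : Ag → TmE Const Var → Fm Ag Const Var Atom → Fm Ag Const Var Atom
  | obox  : Ag → TmO Const Var → Fm Ag Const Var Atom → Fm Ag Const Var Atom

namespace Fm

variable {Ag Const Var Atom : Type}

/-- ¬φ := φ → ⊥ -/
def neg (φ : Fm Ag Const Var Atom) : Fm Ag Const Var Atom := φ.imp bot
/-- ⊤ := ¬⊥ -/
def top : Fm Ag Const Var Atom := neg bot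
/-- φ ∨ ψ := ¬φ → ψ -/
def disj (φ ψ : Fm Ag Const Var Atom) : Fm Ag Const Var Atom := (neg φ).imp ψ
/-- φ ∧ ψ := ¬(¬φ ∨ ¬ψ) -/
def conj (φ ψ : Fm Ag Const Var Atom) : Fm Ag Const Var Atom := neg (disj (neg φ) (neg ψ))
/-- φ ↔ ψ := (φ→ψ) ∧ (ψ→φ) -/
def biim (φ ψ : Fm Ag Const Var Atom) : Fm Ag Const Var Atom := conj (φ.imp ψ) (ψ.imp φ)
/-- strong previous ⊙ₛφ := ¬⊙_w¬φ -/
def sprev (φ : Fm Ag Const Var Atom) : Fm Ag Const Var Atom := neg (wprev (neg φ))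
/-- eventually ◇φ := ⊤ U φ -/
def ev (φ : Fm Ag Const Var Atom) : Fm Ag Const Var Atom := untl top φ
/-- always (henceforth) □φ := ¬◇¬φ -/
def alw (φ : Fm Ag Const Var Atom) : Fm Ag Const Var Atom := neg (ev (neg φ))
/-- once ◇⁻φ := ⊤ S φ -/
def once (φ : Fm Ag Const Var Atom) : Fm Ag Const Var Atom := snce top φ
/-- has-always-been □⁻φ := ¬◇⁻¬φ -/
def sofar (φ : Fm Ag Const Var Atom) : Fm Ag Const Var Atom := neg (once (neg φ))
/-- ⊡φ := □⁻φ ∧ □φ -/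
def boxdot (φ : Fm Ag Const Var Atom) : Fm Ag Const Var Atom := conj (sofar φ) (alw φ)
/-- weak until (unless) φ W ψ := (φ U ψ) ∨ □φ -/
def wuntl (φ ψ : Fm Ag Const Var Atom) : Fm Ag Const Var Atom := disj (untl φ ψ) (alw φ)
/-- permission P[s]ᵢφ := ¬O[s]ᵢ¬φ -/
def pbox (i : Ag) (t : TmO Const Var) (φ : Fm Ag Const Var Atom) : Fm Ag Const Var Atom :=
  neg (obox i t (neg φ))
/-- time = m, i.e. ⊙ₛ^m ⊙_w ⊥ -/
def timeEq : ℕ → Fm Ag Const Var Atom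
  | 0 => wprev bot
  | m + 1 => sprev (timeEq m)
/-- true_m(φ) := ⊡(time=m → φ) -/
def trueAt (m : ℕ) (φ : Fm Ag Const Var Atom) : Fm Ag Const Var Atom :=
  boxdot ((timeEq m).imp φ)

/-- Subformulas. -/
def subf : Fm Ag Const Var Atom → Set (Fm Ag Const Var Atom)
  | atom p => {atom p}
  | bot => {bot}
  | imp φ ψ => insert (imp φ ψ) (subf φ ∪ subf ψ)
  | next φ => insert (next φ) (subf φ)
  | wprev φ => insert (wprev φ) (subf φ)
  | untl φ ψ => insert (untl φ ψ) (subf φ ∪ subf ψ)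
  | snce φ ψ => insert (snce φ ψ) (subf φ ∪ subf ψ)
  | jbox i t φ => insert (jbox i t φ) (subf φ)
  | obox i t φ => insert (obox i t φ) (subf φ)

/-- Subf⁺(χ) := A_χ ∪ {¬ψ : ψ ∈ A_χ}, with A_χ = Subf(χ) ∪ Subf(⊤ S ⊙_w⊥). -/
def subfPlus (χ : Fm Ag Const Var Atom) : Set (Fm Ag Const Var Atom) :=
  (subf χ ∪ subf (snce top (wprev bot))) ∪ neg '' (subf χ ∪ subf (snce top (wprev bot)))

end Fm

variable {Ag Const Var Atom : Type}

/-- Propositional tautologies in the language of JTO. -/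
def Taut (φ : Fm Ag Const Var Atom) : Prop :=
  ∀ v : Fm Ag Const Var Atom → Bool,
    v Fm.bot = false → (∀ a b, v (a.imp b) = (!(v a) || v b)) → v φ = true

/-- The axioms of JTO. -/
inductive IsAxiom : Fm Ag Const Var Atom → Prop
  | taut {φ : Fm Ag Const Var Atom} : Taut φ → IsAxiom φ
  | nextK (φ ψ : Fm Ag Const Var Atom) :
      IsAxiom ((Fm.next (φ.imp ψ)).imp ((Fm.next φ).imp (Fm.next ψ)))
  | alwK (φ ψ : Fm Ag Const Var Atom) :
      IsAxiom ((Fm.alw (φ.imp ψ)).imp ((Fm.alw φ).imp (Fm.alw ψ)))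
  | fn (φ : Fm Ag Const Var Atom) :
      IsAxiom (Fm.biim (Fm.next (Fm.neg φ)) (Fm.neg (Fm.next φ)))
  | ind (φ : Fm Ag Const Var Atom) :
      IsAxiom ((Fm.alw (φ.imp (Fm.next φ))).imp (φ.imp (Fm.alw φ)))
  | untl1 (φ ψ : Fm Ag Const Var Atom) :
      IsAxiom ((Fm.untl φ ψ).imp (Fm.ev ψ))
  | untl2 (φ ψ : Fm Ag Const Var Atom) :
      IsAxiom (Fm.biim (Fm.untl φ ψ) (Fm.disj ψ (Fm.conj φ (Fm.next (Fm.untl φ ψ)))))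
  | sofarK (φ ψ : Fm Ag Const Var Atom) :
      IsAxiom ((Fm.sofar (φ.imp ψ)).imp ((Fm.sofar φ).imp (Fm.sofar ψ)))
  | wprevK (φ ψ : Fm Ag Const Var Atom) :
      IsAxiom ((Fm.wprev (φ.imp ψ)).imp ((Fm.wprev φ).imp (Fm.wprev ψ)))
  | sw (φ : Fm Ag Const Var Atom) : IsAxiom ((Fm.sprev φ).imp (Fm.wprev φ))
  | initial : IsAxiom (Fm.once (Fm.wprev (Fm.bot : Fm Ag Const Var Atom)))
  | sofarInd (φ : Fm Ag Const Var Atom) :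
      IsAxiom ((Fm.sofar (φ.imp (Fm.wprev φ))).imp (φ.imp (Fm.sofar φ)))
  | snce1 (φ ψ : Fm Ag Const Var Atom) : IsAxiom ((Fm.snce φ ψ).imp (Fm.once ψ))
  | snce2 (φ ψ : Fm Ag Const Var Atom) :
      IsAxiom (Fm.biim (Fm.snce φ ψ) (Fm.disj ψ (Fm.conj φ (Fm.sprev (Fm.snce φ ψ)))))
  | fp (φ : Fm Ag Const Var Atom) : IsAxiom (φ.imp (Fm.next (Fm.sprev φ)))
  | pf (φ : Fm Ag Const Var Atom) : IsAxiom (φ.imp (Fm.wprev (Fm.next φ)))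
  | app (i : Ag) (t s : TmE Const Var) (φ ψ : Fm Ag Const Var Atom) :
      IsAxiom ((Fm.jbox i t (φ.imp ψ)).imp ((Fm.jbox i s φ).imp (Fm.jbox i (TmE.times t s) ψ)))
  | sum1 (i : Ag) (t s : TmE Const Var) (φ : Fm Ag Const Var Atom) :
      IsAxiom ((Fm.jbox i t φ).imp (Fm.jbox i (TmE.plus t s) φ))
  | sum2 (i : Ag) (t s : TmE Const Var) (φ : Fm Ag Const Var Atom) :
      IsAxiom ((Fm.jbox i s φ).imp (Fm.jbox i (TmE.plus t s) φ))
  | fact (i : Ag) (t : TmE Const Var) (φ : Fm Ag Const Var Atom) :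
      IsAxiom ((Fm.jbox i t φ).imp φ)
  | pos (i : Ag) (t : TmE Const Var) (φ : Fm Ag Const Var Atom) :
      IsAxiom ((Fm.jbox i t φ).imp (Fm.jbox i (TmE.bang t) (Fm.jbox i t φ)))
  | appO (i : Ag) (t s : TmO Const Var) (φ ψ : Fm Ag Const Var Atom) :
      IsAxiom ((Fm.obox i t (φ.imp ψ)).imp ((Fm.obox i s φ).imp (Fm.obox i (TmO.times t s) ψ)))
  | noc (i : Ag) (t : TmO Const Var) (φ : Fm Ag Const Var Atom) :
      IsAxiom ((Fm.obox i t φ).imp (Fm.pbox i t φ))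
  | ofact (i : Ag) (t : TmO Const Var) (φ : Fm Ag Const Var Atom) :
      IsAxiom (Fm.obox i (TmO.ddag t) ((Fm.obox i t φ).imp φ))

/-- Formulas of the shape [c_{j_n}]_{i_n} … [c_{j_1}]_{i_1} φ with φ an axiom instance, n ≥ 1. -/
inductive EIter : Fm Ag Const Var Atom → Prop
  | base {i : Ag} {c : Const} {φ : Fm Ag Const Var Atom} :
      IsAxiom φ → EIter (Fm.jbox i (TmE.const c) φ)
  | step {i : Ag} {c : Const} {φ : Fm Ag Const Var Atom} :
      EIter φ → EIter (Fm.jbox i (TmE.const c) φ)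

/-- Formulas of the shape O[c_{j_n}]_{i_n} … O[c_{j_1}]_{i_1} φ with φ an axiom instance, n ≥ 1. -/
inductive OIter : Fm Ag Const Var Atom → Prop
  | base {i : Ag} {c : Const} {φ : Fm Ag Const Var Atom} :
      IsAxiom φ → OIter (Fm.obox i (TmO.const c) φ)
  | step {i : Ag} {c : Const} {φ : Fm Ag Const Var Atom} :
      OIter φ → OIter (Fm.obox i (TmO.const c) φ)

/-- A constant specification: a downward closed set of iterated constant-justification
assertions of axiom instances. -/
structure ConstSpec (Ag Const Var Atom : Type) where
  set : Set (Fm Ag Const Var Atom)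
  shape : ∀ φ ∈ set, EIter φ ∨ OIter φ
  dcE : ∀ (i : Ag) (c : Const) (φ : Fm Ag Const Var Atom),
    Fm.jbox i (TmE.const c) φ ∈ set → EIter φ → φ ∈ set
  dcO : ∀ (i : Ag) (c : Const) (φ : Fm Ag Const Var Atom),
    Fm.obox i (TmO.const c) φ ∈ set → OIter φ → φ ∈ set

/-- CS^E : the epistemic part of a constant specification. -/
def ConstSpec.csE (CS : ConstSpec Ag Const Var Atom) : Set (Fm Ag Const Var Atom) :=
  {φ ∈ CS.set | EIter φ}

/-- CS^O : the deontic part of a constant specification. -/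
def ConstSpec.csO (CS : ConstSpec Ag Const Var Atom) : Set (Fm Ag Const Var Atom) :=
  {φ ∈ CS.set | OIter φ}

/-- Derivability in the Hilbert system JTO_CS. -/
inductive Deriv (CS : ConstSpec Ag Const Var Atom) : Fm Ag Const Var Atom → Prop
  | ax {φ : Fm Ag Const Var Atom} : IsAxiom φ → Deriv CS φ
  | mp {φ ψ : Fm Ag Const Var Atom} : Deriv CS (φ.imp ψ) → Deriv CS φ → Deriv CS ψ
  | necNext {φ : Fm Ag Const Var Atom} : Deriv CS φ → Deriv CS (Fm.next φ)
  | necWPrev {φ : Fm Ag Const Var Atom} : Deriv CS φ → Deriv CS (Fm.wprev φ)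
  | necAlw {φ : Fm Ag Const Var Atom} : Deriv CS φ → Deriv CS (Fm.alw φ)
  | necSofar {φ : Fm Ag Const Var Atom} : Deriv CS φ → Deriv CS (Fm.sofar φ)
  | csax {φ : Fm Ag Const Var Atom} : φ ∈ CS.set → Deriv CS φ

/-- Conjunction of a list of formulas. -/
def conjList : List (Fm Ag Const Var Atom) → Fm Ag Const Var Atom
  | [] => Fm.top
  | φ :: l => Fm.conj φ (conjList l)

/-- T ⊢_CS φ iff ⊢_CS (ψ₁ ∧ … ∧ ψ_n) → φ for some ψ₁, …, ψ_n ∈ T. -/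
def DerivFrom (CS : ConstSpec Ag Const Var Atom) (T : Set (Fm Ag Const Var Atom))
    (φ : Fm Ag Const Var Atom) : Prop :=
  ∃ L : List (Fm Ag Const Var Atom), (∀ ψ ∈ L, ψ ∈ T) ∧ Deriv CS ((conjList L).imp φ)

/-- A set of formulas is consistent if it does not derive ⊥. -/
def Consistent (CS : ConstSpec Ag Const Var Atom) (T : Set (Fm Ag Const Var Atom)) : Prop :=
  ¬ DerivFrom CS T Fm.bot

end JTO
namespace JTO

variable {Ag Const Var Atom : Type}

/-- The data of an F-interpreted system (Fitting-style), without conditions. -/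
structure FQuasi (Ag Const Var Atom S : Type) where
  R : Set (ℕ → S)
  K : Ag → S → S → Prop
  KO : Ag → S → S → Prop
  E : Ag → S → TmE Const Var → Set (Fm Ag Const Var Atom)
  EO : Ag → S → TmO Const Var → Set (Fm Ag Const Var Atom)
  val : S → Set Atom

/-- Truth at a point (r, n) of an F-interpreted system. -/
def FQuasi.Sat {S : Type} (I : FQuasi Ag Const Var Atom S) :
    Fm Ag Const Var Atom → (ℕ → S) → ℕ → Prop
  | .atom p, r, n => p ∈ I.val (r n)
  | .bot, _, _ => False
  | .imp φ ψ, r, n => I.Sat φ r n → I.Sat ψ r n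
  | .next φ, r, n => I.Sat φ r (n + 1)
  | .wprev φ, r, n => n = 0 ∨ I.Sat φ r (n - 1)
  | .untl φ ψ, r, n => ∃ m, n ≤ m ∧ I.Sat ψ r m ∧ ∀ k, n ≤ k → k < m → I.Sat φ r k
  | .snce φ ψ, r, n => ∃ m, m ≤ n ∧ I.Sat ψ r m ∧ ∀ k, m < k → k ≤ n → I.Sat φ r k
  | .jbox i t φ, r, n =>
      φ ∈ I.E i (r n) t ∧ ∀ r' ∈ I.R, ∀ n' : ℕ, I.K i (r n) (r' n') → I.Sat φ r' n'
  | .obox i t φ, r, n =>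
      φ ∈ I.EO i (r n) t ∧ ∀ r' ∈ I.R, ∀ n' : ℕ, I.KO i (r n) (r' n') → I.Sat φ r' n'

/-- An F-interpreted system for JTO_CS. -/
structure FIS (Ag Const Var Atom S : Type) (CS : ConstSpec Ag Const Var Atom)
    extends FQuasi Ag Const Var Atom S where
  Sne : Nonempty S
  Rne : R.Nonempty
  Krefl : ∀ (i : Ag) (w : S), K i w w
  Ktrans : ∀ (i : Ag) (u v w : S), K i u v → K i v w → K i u w
  KOshift : ∀ (i : Ag) (w v : S), KO i w v → KO i v v
  Emono : ∀ (i : Ag) (v w : S) (t : TmE Const Var), K i v w → E i v t ⊆ E i w t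
  Ecs : ∀ (i : Ag) (w : S) (t : TmE Const Var) (φ : Fm Ag Const Var Atom),
    Fm.jbox i t φ ∈ CS.csE → φ ∈ E i w t
  Eapp : ∀ (i : Ag) (w : S) (t s : TmE Const Var) (φ ψ : Fm Ag Const Var Atom),
    φ.imp ψ ∈ E i w t → φ ∈ E i w s → ψ ∈ E i w (TmE.times t s)
  Epos : ∀ (i : Ag) (w : S) (t : TmE Const Var) (φ : Fm Ag Const Var Atom),
    φ ∈ E i w t → Fm.jbox i t φ ∈ E i w (TmE.bang t)
  EOcs : ∀ (i : Ag) (w : S) (t : TmO Const Var) (φ : Fm Ag Const Var Atom),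
    Fm.obox i t φ ∈ CS.csO → φ ∈ EO i w t
  EOapp : ∀ (i : Ag) (w : S) (t s : TmO Const Var) (φ ψ : Fm Ag Const Var Atom),
    φ.imp ψ ∈ EO i w t → φ ∈ EO i w s → ψ ∈ EO i w (TmO.times t s)
  EOcons : ∀ (i : Ag) (w : S) (t : TmO Const Var) (φ : Fm Ag Const Var Atom),
    φ ∈ EO i w t → Fm.neg φ ∉ EO i w t
  EOfact : ∀ (i : Ag) (w : S) (t : TmO Const Var) (φ : Fm Ag Const Var Atom),
    (Fm.obox i t φ).imp φ ∈ EO i w (TmO.ddag t)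

/-- Truth at a point of an F-interpreted system. -/
abbrev FIS.Sat {S : Type} {CS : ConstSpec Ag Const Var Atom}
    (I : FIS Ag Const Var Atom S CS) :
    Fm Ag Const Var Atom → (ℕ → S) → ℕ → Prop :=
  I.toFQuasi.Sat

/-- I ⊨ φ : truth at every point of the system. -/
def FIS.Valid {S : Type} {CS : ConstSpec Ag Const Var Atom}
    (I : FIS Ag Const Var Atom S CS) (φ : Fm Ag Const Var Atom) : Prop :=
  ∀ r ∈ I.R, ∀ n : ℕ, I.Sat φ r n

/-- ⊨_CS φ : validity in all F-interpreted systems for JTO_CS. -/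
def FValid (CS : ConstSpec Ag Const Var Atom) (φ : Fm Ag Const Var Atom) : Prop :=
  ∀ (S : Type) (I : FIS Ag Const Var Atom S CS), I.Valid φ

/-- T ⊨_CS φ : the local consequence relation over F-interpreted systems. -/
def FConseq (CS : ConstSpec Ag Const Var Atom) (T : Set (Fm Ag Const Var Atom))
    (φ : Fm Ag Const Var Atom) : Prop :=
  ∀ (S : Type) (I : FIS Ag Const Var Atom S CS), ∀ r ∈ I.R, ∀ n : ℕ,
    (∀ ψ ∈ T, I.Sat ψ r n) → I.Sat φ r n

/-- Maximal consistent sets of formulas. -/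
def MCS (CS : ConstSpec Ag Const Var Atom) : Set (Set (Fm Ag Const Var Atom)) :=
  {Γ | Consistent CS Γ ∧ ∀ Δ, Γ ⊂ Δ → ¬ Consistent CS Δ}

/-- χ-maximal consistent subsets of Subf⁺(χ). -/
def MCSx (CS : ConstSpec Ag Const Var Atom) (χ : Fm Ag Const Var Atom) :
    Set (Set (Fm Ag Const Var Atom)) :=
  {X | X ⊆ Fm.subfPlus χ ∧ Consistent CS X ∧
    ∀ Y, Y ⊆ Fm.subfPlus χ → X ⊂ Y → ¬ Consistent CS Y}

/-- The relation R_○ on MCS_χ (given by witnessing maximal consistent sets). -/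
def Rnext (CS : ConstSpec Ag Const Var Atom) (χ : Fm Ag Const Var Atom)
    (X Y : Set (Fm Ag Const Var Atom)) : Prop :=
  ∃ Γ ∈ MCS CS, ∃ Δ ∈ MCS CS, X = Γ ∩ Fm.subfPlus χ ∧ Y = Δ ∩ Fm.subfPlus χ ∧
    {φ | Fm.next φ ∈ Γ} ⊆ Δ

/-- Acceptable sequences of elements of MCS_χ. -/
def Acceptable (CS : ConstSpec Ag Const Var Atom) (χ : Fm Ag Const Var Atom)
    (X : ℕ → Set (Fm Ag Const Var Atom)) : Prop :=
  (∀ n, X n ∈ MCSx CS χ) ∧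
  (∀ n, Rnext CS χ (X n) (X (n + 1))) ∧
  (∀ n (φ ψ : Fm Ag Const Var Atom), Fm.untl φ ψ ∈ X n →
    ∃ m, n ≤ m ∧ ψ ∈ X m ∧ ∀ k, n ≤ k → k < m → φ ∈ X k) ∧
  Fm.wprev Fm.bot ∈ X 0

/-- The canonical epistemic accessibility relation. -/
def canK (CS : ConstSpec Ag Const Var Atom) (χ : Fm Ag Const Var Atom) (i : Ag)
    (X Y : Set (Fm Ag Const Var Atom)) : Prop :=
  ∀ Δ ∈ MCS CS, Y = Δ ∩ Fm.subfPlus χ →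
    ∃ Γ ∈ MCS CS, X = Γ ∩ Fm.subfPlus χ ∧
      {φ | ∃ t : TmE Const Var, Fm.jbox i t φ ∈ Γ} ⊆ Δ

/-- The canonical evidence function. -/
def canE (CS : ConstSpec Ag Const Var Atom) (χ : Fm Ag Const Var Atom) (i : Ag)
    (X : Set (Fm Ag Const Var Atom)) (t : TmE Const Var) : Set (Fm Ag Const Var Atom) :=
  {φ | ∀ Γ ∈ MCS CS, X = Γ ∩ Fm.subfPlus χ → Fm.jbox i t φ ∈ Γ}

/-- The canonical deontic accessibility relation. -/
def canKO (CS : ConstSpec Ag Const Var Atom) (χ : Fm Ag Const Var Atom) (i : Ag)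
    (X Y : Set (Fm Ag Const Var Atom)) : Prop :=
  ∃ Γ ∈ MCS CS, ∃ Δ ∈ MCS CS, X = Γ ∩ Fm.subfPlus χ ∧ Y = Δ ∩ Fm.subfPlus χ ∧
    {φ | ∃ t : TmO Const Var, Fm.obox i t φ ∈ Γ} ⊆ Δ

/-- The canonical normative evidence function. -/
def canEO (CS : ConstSpec Ag Const Var Atom) (χ : Fm Ag Const Var Atom) (i : Ag)
    (X : Set (Fm Ag Const Var Atom)) (t : TmO Const Var) : Set (Fm Ag Const Var Atom) :=
  {φ | ∀ Γ ∈ MCS CS, X = Γ ∩ Fm.subfPlus χ → Fm.obox i t φ ∈ Γ}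

/-- The χ-canonical F-interpreted system (as structured data). -/
def canFQuasi (CS : ConstSpec Ag Const Var Atom) (χ : Fm Ag Const Var Atom) :
    FQuasi Ag Const Var Atom ↥(MCSx CS χ) where
  R := {r | Acceptable CS χ (fun n => ((r n : Set (Fm Ag Const Var Atom))))}
  K := fun i X Y => canK CS χ i X.1 Y.1
  KO := fun i X Y => canKO CS χ i X.1 Y.1
  E := fun i X t => canE CS χ i X.1 t
  EO := fun i X t => canEO CS χ i X.1 t
  val := fun X => {p | Fm.atom p ∈ X.1}

end JTO
namespace JTO

variable {Ag Const Var Atom : Type}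

/-- The data of a quasi-interpreted-neighborhood system. -/
structure NQuasi (Ag Const Var Atom S : Type) where
  R : Set (ℕ → S)
  N : Ag → S → TmE Const Var → Set (Set S)
  NO : Ag → S → TmO Const Var → Set (Set S)
  val : S → Set Atom
  valF : S → Set (Fm Ag Const Var Atom)

/-- The image Im(R) of the system of runs. -/
def NQuasi.Im {S : Type} (I : NQuasi Ag Const Var Atom S) : Set S :=
  {w | ∃ r ∈ I.R, ∃ n : ℕ, r n = w}

/-- Truth at a point (r, n) of a quasi-interpreted-neighborhood system. -/
def NQuasi.SatP {S : Type} (I : NQuasi Ag Const Var Atom S) :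
    Fm Ag Const Var Atom → (ℕ → S) → ℕ → Prop
  | .atom p, r, n => p ∈ I.val (r n)
  | .bot, _, _ => False
  | .imp φ ψ, r, n => I.SatP φ r n → I.SatP ψ r n
  | .next φ, r, n => I.SatP φ r (n + 1)
  | .wprev φ, r, n => n = 0 ∨ I.SatP φ r (n - 1)
  | .untl φ ψ, r, n => ∃ m, n ≤ m ∧ I.SatP ψ r m ∧ ∀ k, n ≤ k → k < m → I.SatP φ r k
  | .snce φ ψ, r, n => ∃ m, m ≤ n ∧ I.SatP ψ r m ∧ ∀ k, m < k → k ≤ n → I.SatP φ r k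
  | .jbox i t φ, r, n =>
      {w | (∃ r' ∈ I.R, ∃ n' : ℕ, r' n' = w ∧ I.SatP φ r' n') ∨
            (w ∉ I.Im ∧ φ ∈ I.valF w)} ∈ I.N i (r n) t
  | .obox i t φ, r, n =>
      {w | (∃ r' ∈ I.R, ∃ n' : ℕ, r' n' = w ∧ I.SatP φ r' n') ∨
            (w ∉ I.Im ∧ φ ∈ I.valF w)} ∈ I.NO i (r n) t

/-- Truth at a state of a quasi-interpreted-neighborhood system. -/
def NQuasi.SatS {S : Type} (I : NQuasi Ag Const Var Atom S)
    (φ : Fm Ag Const Var Atom) (w : S) : Prop :=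
  (∃ r ∈ I.R, ∃ n : ℕ, r n = w ∧ I.SatP φ r n) ∨ (w ∉ I.Im ∧ φ ∈ I.valF w)

/-- The truth set ⟦φ⟧ of a formula. -/
def NQuasi.tset {S : Type} (I : NQuasi Ag Const Var Atom S)
    (φ : Fm Ag Const Var Atom) : Set S :=
  {w | I.SatS φ w}

/-- An interpreted-neighborhood system for JTO_CS. -/
structure NIS (Ag Const Var Atom S : Type) (CS : ConstSpec Ag Const Var Atom)
    extends NQuasi Ag Const Var Atom S where
  Sne : Nonempty S
  Rne : R.Nonempty
  Ncs : ∀ (i : Ag) (t : TmE Const Var) (φ : Fm Ag Const Var Atom),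
    Fm.jbox i t φ ∈ CS.csE → ∀ w ∈ toNQuasi.Im, toNQuasi.tset φ ∈ N i w t
  Napp : ∀ (i : Ag), ∀ w ∈ toNQuasi.Im, ∀ (t s : TmE Const Var) (φ ψ : Fm Ag Const Var Atom),
    toNQuasi.tset (φ.imp ψ) ∈ N i w t → toNQuasi.tset φ ∈ N i w s →
      toNQuasi.tset ψ ∈ N i w (TmE.times t s)
  Nsum : ∀ (i : Ag), ∀ w ∈ toNQuasi.Im, ∀ (t s : TmE Const Var) (φ : Fm Ag Const Var Atom),
    toNQuasi.tset φ ∈ N i w s →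
      toNQuasi.tset φ ∈ N i w (TmE.plus t s) ∧ toNQuasi.tset φ ∈ N i w (TmE.plus s t)
  Nrefl : ∀ (i : Ag), ∀ w ∈ toNQuasi.Im, ∀ (t : TmE Const Var) (φ : Fm Ag Const Var Atom),
    toNQuasi.tset φ ∈ N i w t → w ∈ toNQuasi.tset φ
  Npos : ∀ (i : Ag), ∀ w ∈ toNQuasi.Im, ∀ (t : TmE Const Var) (φ : Fm Ag Const Var Atom),
    toNQuasi.tset φ ∈ N i w t → toNQuasi.tset (Fm.jbox i t φ) ∈ N i w (TmE.bang t)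
  NOcs : ∀ (i : Ag) (t : TmO Const Var) (φ : Fm Ag Const Var Atom),
    Fm.obox i t φ ∈ CS.csO → ∀ w ∈ toNQuasi.Im, toNQuasi.tset φ ∈ NO i w t
  NOapp : ∀ (i : Ag), ∀ w ∈ toNQuasi.Im, ∀ (t s : TmO Const Var) (φ ψ : Fm Ag Const Var Atom),
    toNQuasi.tset (φ.imp ψ) ∈ NO i w t → toNQuasi.tset φ ∈ NO i w s →
      toNQuasi.tset ψ ∈ NO i w (TmO.times t s)
  NOnoc : ∀ (i : Ag), ∀ w ∈ toNQuasi.Im, ∀ (t : TmO Const Var) (φ : Fm Ag Const Var Atom),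
    toNQuasi.tset φ ∈ NO i w t → toNQuasi.tset (Fm.neg φ) ∉ NO i w t
  NOfact : ∀ (i : Ag), ∀ w ∈ toNQuasi.Im, ∀ (t : TmO Const Var) (φ : Fm Ag Const Var Atom),
    toNQuasi.tset ((Fm.obox i t φ).imp φ) ∈ NO i w (TmO.ddag t)

/-- Truth at a point of an interpreted-neighborhood system. -/
abbrev NIS.SatP {S : Type} {CS : ConstSpec Ag Const Var Atom}
    (I : NIS Ag Const Var Atom S CS) :
    Fm Ag Const Var Atom → (ℕ → S) → ℕ → Prop :=
  I.toNQuasi.SatP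

/-- I ⊨ φ for an interpreted-neighborhood system. -/
def NIS.Valid {S : Type} {CS : ConstSpec Ag Const Var Atom}
    (I : NIS Ag Const Var Atom S CS) (φ : Fm Ag Const Var Atom) : Prop :=
  ∀ r ∈ I.R, ∀ n : ℕ, I.SatP φ r n

/-- ⊨^N_CS φ : validity in all interpreted-neighborhood systems for JTO_CS. -/
def NValid (CS : ConstSpec Ag Const Var Atom) (φ : Fm Ag Const Var Atom) : Prop :=
  ∀ (S : Type) (I : NIS Ag Const Var Atom S CS), I.Valid φ

/-- T ⊨^N_CS φ : local consequence over interpreted-neighborhood systems. -/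
def NConseq (CS : ConstSpec Ag Const Var Atom) (T : Set (Fm Ag Const Var Atom))
    (φ : Fm Ag Const Var Atom) : Prop :=
  ∀ (S : Type) (I : NIS Ag Const Var Atom S CS), ∀ r ∈ I.R, ∀ n : ℕ,
    (∀ ψ ∈ T, I.SatP ψ r n) → I.SatP φ r n

end JTO

namespace JTO

section Aux

variable {Ag Const Var Atom : Type} {CS : ConstSpec Ag Const Var Atom}

lemma deriv_of_taut {φ : Fm Ag Const Var Atom} (h : Taut φ) : Deriv CS φ :=
  Deriv.ax (IsAxiom.taut h)

lemma taut_imp_top_imp (a : Fm Ag Const Var Atom) : Taut (a.imp (Fm.top.imp a)) := by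
  intro v hb hi
  simp only [Fm.top, Fm.neg, hi, hb]
  cases v a <;> rfl

lemma taut_imp_top (a : Fm Ag Const Var Atom) : Taut (a.imp Fm.top) := by
  intro v hb hi
  simp only [Fm.top, Fm.neg, hi, hb]
  cases v a <;> rfl

lemma taut_id (a : Fm Ag Const Var Atom) : Taut (a.imp a) := by
  intro v hb hi
  simp only [hi]
  cases v a <;> rfl

lemma taut_conj_top (a : Fm Ag Const Var Atom) : Taut ((Fm.conj a Fm.top).imp a) := by
  intro v hb hi
  simp only [Fm.conj, Fm.disj, Fm.neg, Fm.top, hi, hb]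
  cases v a <;> rfl

lemma taut_exp (a b c : Fm Ag Const Var Atom) :
    Taut (((Fm.conj a b).imp c).imp (b.imp (a.imp c))) := by
  intro v hb hi
  simp only [Fm.conj, Fm.disj, Fm.neg, hi, hb]
  cases v a <;> cases v b <;> cases v c <;> rfl

lemma taut_conj_mono (a b c : Fm Ag Const Var Atom) :
    Taut ((b.imp c).imp ((Fm.conj a b).imp (Fm.conj a c))) := by
  intro v hb hi
  simp only [Fm.conj, Fm.disj, Fm.neg, hi, hb]
  cases v a <;> cases v b <;> cases v c <;> rfl

lemma taut_conj_elim (a b c : Fm Ag Const Var Atom) :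
    Taut ((b.imp c).imp ((Fm.conj a b).imp c)) := by
  intro v hb hi
  simp only [Fm.conj, Fm.disj, Fm.neg, hi, hb]
  cases v a <;> cases v b <;> cases v c <;> rfl

lemma taut_combine (d x y a b : Fm Ag Const Var Atom) :
    Taut ((d.imp x).imp ((d.imp y).imp ((x.imp (a.imp b)).imp ((y.imp a).imp (d.imp b))))) := by
  intro v hb hi
  simp only [hi]
  cases v d <;> cases v x <;> cases v y <;> cases v a <;> cases v b <;> rfl

lemma deriv_top_imp {φ : Fm Ag Const Var Atom} (h : Deriv CS φ) :
    Deriv CS (Fm.top.imp φ) :=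
  Deriv.mp (deriv_of_taut (taut_imp_top_imp φ)) h

lemma deriv_derivFrom {T : Set (Fm Ag Const Var Atom)} {φ : Fm Ag Const Var Atom}
    (h : Deriv CS φ) : DerivFrom CS T φ :=
  ⟨[], by simp, deriv_top_imp h⟩

lemma mem_derivFrom {T : Set (Fm Ag Const Var Atom)} {φ : Fm Ag Const Var Atom}
    (h : φ ∈ T) : DerivFrom CS T φ :=
  ⟨[φ], by simpa using h, deriv_of_taut (taut_conj_top φ)⟩

lemma deriv_conj_append1 :
    ∀ L1 L2 : List (Fm Ag Const Var Atom),
      Deriv CS ((conjList (L1 ++ L2)).imp (conjList L1))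
  | [], L2 => deriv_of_taut (taut_imp_top (conjList L2))
  | χ :: L1, L2 =>
    Deriv.mp (deriv_of_taut (taut_conj_mono χ (conjList (L1 ++ L2)) (conjList L1)))
      (deriv_conj_append1 L1 L2)

lemma deriv_conj_append2 :
    ∀ L1 L2 : List (Fm Ag Const Var Atom),
      Deriv CS ((conjList (L1 ++ L2)).imp (conjList L2))
  | [], L2 => deriv_of_taut (taut_id (conjList L2))
  | χ :: L1, L2 =>
    Deriv.mp (deriv_of_taut (taut_conj_elim χ (conjList (L1 ++ L2)) (conjList L2)))
      (deriv_conj_append2 L1 L2)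

lemma derivFrom_mp {T : Set (Fm Ag Const Var Atom)} {a b : Fm Ag Const Var Atom}
    (h1 : DerivFrom CS T (a.imp b)) (h2 : DerivFrom CS T a) : DerivFrom CS T b := by
  obtain ⟨M1, hM1, d1⟩ := h1
  obtain ⟨M2, hM2, d2⟩ := h2
  refine ⟨M1 ++ M2, ?_, ?_⟩
  · intro χ hχ
    rcases List.mem_append.mp hχ with h | h
    · exact hM1 _ h
    · exact hM2 _ h
  · exact Deriv.mp (Deriv.mp (Deriv.mp (Deriv.mp
      (deriv_of_taut (taut_combine (conjList (M1 ++ M2)) (conjList M1) (conjList M2) a b))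
      (deriv_conj_append1 M1 M2)) (deriv_conj_append2 M1 M2)) d1) d2

lemma derivFrom_of_imp {T : Set (Fm Ag Const Var Atom)} :
    ∀ (L : List (Fm Ag Const Var Atom)) (ψ : Fm Ag Const Var Atom),
      Deriv CS ((conjList L).imp ψ) → (∀ χ ∈ L, DerivFrom CS T χ) → DerivFrom CS T ψ
  | [], ψ, h, _ => ⟨[], by simp, h⟩
  | χ :: L, ψ, h, hmem => by
    have h1 : Deriv CS ((conjList L).imp (χ.imp ψ)) :=
      Deriv.mp (deriv_of_taut (taut_exp χ (conjList L) ψ)) h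
    have h2 := derivFrom_of_imp L (χ.imp ψ) h1 (fun x hx => hmem x (List.mem_cons_of_mem _ hx))
    exact derivFrom_mp h2 (hmem χ List.mem_cons_self)

lemma derivFrom_derivFrom {T : Set (Fm Ag Const Var Atom)} {ψ : Fm Ag Const Var Atom}
    {T' : Set (Fm Ag Const Var Atom)} (h : DerivFrom CS T' ψ)
    (hT : ∀ χ ∈ T', DerivFrom CS T χ) : DerivFrom CS T ψ := by
  obtain ⟨L, hL, d⟩ := h
  exact derivFrom_of_imp L ψ d (fun χ hχ => hT χ (hL χ hχ))

lemma consistent_mono {T T' : Set (Fm Ag Const Var Atom)} (hT : T ⊆ T')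
    (h : Consistent CS T') : Consistent CS T := by
  intro hbot
  exact h (derivFrom_derivFrom hbot (fun χ hχ => mem_derivFrom (hT hχ)))

lemma mcs_closed {Γ : Set (Fm Ag Const Var Atom)} {φ : Fm Ag Const Var Atom}
    (hΓ : Γ ∈ MCS CS) (h : DerivFrom CS Γ φ) : φ ∈ Γ := by
  by_contra hφ
  have hbot : DerivFrom CS (insert φ Γ) Fm.bot :=
    not_not.mp (hΓ.2 _ (Set.ssubset_insert hφ))
  refine hΓ.1 (derivFrom_derivFrom hbot ?_)
  intro χ hχ
  rcases hχ with hχ | hχ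
  · exact hχ ▸ h
  · exact mem_derivFrom hχ

lemma mcs_deriv {Γ : Set (Fm Ag Const Var Atom)} {φ : Fm Ag Const Var Atom}
    (hΓ : Γ ∈ MCS CS) (h : Deriv CS φ) : φ ∈ Γ :=
  mcs_closed hΓ (deriv_derivFrom h)

lemma mcs_ax {Γ : Set (Fm Ag Const Var Atom)} {φ : Fm Ag Const Var Atom}
    (hΓ : Γ ∈ MCS CS) (h : IsAxiom φ) : φ ∈ Γ :=
  mcs_deriv hΓ (Deriv.ax h)

lemma mcs_mp {Γ : Set (Fm Ag Const Var Atom)} {φ ψ : Fm Ag Const Var Atom}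
    (hΓ : Γ ∈ MCS CS) (h1 : φ.imp ψ ∈ Γ) (h2 : φ ∈ Γ) : ψ ∈ Γ :=
  mcs_closed hΓ (derivFrom_mp (mem_derivFrom h1) (mem_derivFrom h2))

lemma chain_finite {c : Set (Set (Fm Ag Const Var Atom))}
    (hc : IsChain (· ⊆ ·) c) (hne : c.Nonempty) :
    ∀ L : List (Fm Ag Const Var Atom), (∀ x ∈ L, x ∈ ⋃₀ c) → ∃ Γ ∈ c, ∀ x ∈ L, x ∈ Γ
  | [], _ => ⟨hne.choose, hne.choose_spec, by simp⟩
  | χ :: L, hL => by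
    obtain ⟨Γ1, hΓ1, hΓ1L⟩ := chain_finite hc hne L (fun x hx => hL x (List.mem_cons_of_mem _ hx))
    obtain ⟨Γ2, hΓ2, hχΓ2⟩ := hL χ List.mem_cons_self
    obtain ⟨Γ3, hΓ3, h13, h23⟩ := hc.directedOn Γ1 hΓ1 Γ2 hΓ2
    refine ⟨Γ3, hΓ3, ?_⟩
    intro x hx
    rcases List.mem_cons.mp hx with rfl | hx
    · exact h23 hχΓ2
    · exact h13 (hΓ1L x hx)

lemma lindenbaum {T : Set (Fm Ag Const Var Atom)} (h : Consistent CS T) :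
    ∃ Γ ∈ MCS CS, T ⊆ Γ := by
  have hzorn : ∀ c ⊆ {Γ | Consistent CS Γ}, IsChain (· ⊆ ·) c → c.Nonempty →
      ∃ ub ∈ {Γ | Consistent CS Γ}, ∀ s ∈ c, s ⊆ ub := by
    intro c hcS hchain hcne
    refine ⟨⋃₀ c, ?_, fun s hs => Set.subset_sUnion_of_mem hs⟩
    intro hbot
    obtain ⟨L, hL, d⟩ := hbot
    obtain ⟨Γ, hΓc, hΓL⟩ := chain_finite hchain hcne L hL
    exact hcS hΓc ⟨L, hΓL, d⟩
  obtain ⟨M, hTM, hM⟩ := zorn_subset_nonempty {Γ | Consistent CS Γ} hzorn T h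
  refine ⟨M, ⟨hM.prop, ?_⟩, hTM⟩
  intro Δ hMΔ hΔcon
  exact absurd (hM.2 hΔcon hMΔ.subset) hMΔ.not_subset

lemma mcsx_rep {χ : Fm Ag Const Var Atom} {X : Set (Fm Ag Const Var Atom)}
    (hX : X ∈ MCSx CS χ) : ∃ Γ ∈ MCS CS, X = Γ ∩ Fm.subfPlus χ := by
  obtain ⟨Γ, hΓ, hXΓ⟩ := lindenbaum hX.2.1
  refine ⟨Γ, hΓ, ?_⟩
  apply Set.Subset.antisymm
  · exact fun ψ hψ => ⟨hXΓ hψ, hX.1 hψ⟩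
  · intro ψ hψ
    by_contra hψX
    have hsub : insert ψ X ⊆ Fm.subfPlus χ := by
      intro x hx
      rcases hx with rfl | hx
      · exact hψ.2
      · exact hX.1 hx
    have hcon : Consistent CS (insert ψ X) := by
      refine consistent_mono ?_ hΓ.1
      intro x hx
      rcases hx with rfl | hx
      · exact hψ.1
      · exact hXΓ hx
    exact hX.2.2 _ hsub (Set.ssubset_insert hψX) hcon

end Aux

/-- the χ-canonical F-interpreted system satisfies all the defining
conditions of an F-interpreted system for JTO_CS. -/
theorem canonical_is_fis (Ag Const Var Atom : Type)
    (CS : ConstSpec Ag Const Var Atom) (χ : Fm Ag Const Var Atom) :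
    -- each canonical R_i is reflexive
    (∀ i : Ag, ∀ X ∈ MCSx CS χ, canK CS χ i X X) ∧
    -- each canonical R_i is transitive
    (∀ i : Ag, ∀ X ∈ MCSx CS χ, ∀ Y ∈ MCSx CS χ, ∀ Z ∈ MCSx CS χ,
      canK CS χ i X Y → canK CS χ i Y Z → canK CS χ i X Z) ∧
    -- each canonical R^O_i is shift reflexive
    (∀ i : Ag, ∀ X ∈ MCSx CS χ, ∀ Y ∈ MCSx CS χ,
      canKO CS χ i X Y → canKO CS χ i Y Y) ∧
    -- canonical E_i : monotonicity
    (∀ i : Ag, ∀ X ∈ MCSx CS χ, ∀ Y ∈ MCSx CS χ, ∀ t : TmE Const Var,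
      canK CS χ i X Y → canE CS χ i X t ⊆ canE CS χ i Y t) ∧
    -- canonical E_i : constant specification
    (∀ (i : Ag) (t : TmE Const Var) (φ : Fm Ag Const Var Atom),
      Fm.jbox i t φ ∈ CS.csE → ∀ X ∈ MCSx CS χ, φ ∈ canE CS χ i X t) ∧
    -- canonical E_i : application
    (∀ i : Ag, ∀ X ∈ MCSx CS χ, ∀ (t s : TmE Const Var) (φ ψ : Fm Ag Const Var Atom),
      φ.imp ψ ∈ canE CS χ i X t → φ ∈ canE CS χ i X s →
        ψ ∈ canE CS χ i X (TmE.times t s)) ∧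
    -- canonical E_i : positive introspection
    (∀ i : Ag, ∀ X ∈ MCSx CS χ, ∀ (t : TmE Const Var) (φ : Fm Ag Const Var Atom),
      φ ∈ canE CS χ i X t → Fm.jbox i t φ ∈ canE CS χ i X (TmE.bang t)) ∧
    -- canonical E^O_i : constant specification
    (∀ (i : Ag) (t : TmO Const Var) (φ : Fm Ag Const Var Atom),
      Fm.obox i t φ ∈ CS.csO → ∀ X ∈ MCSx CS χ, φ ∈ canEO CS χ i X t) ∧
    -- canonical E^O_i : application
    (∀ i : Ag, ∀ X ∈ MCSx CS χ, ∀ (t s : TmO Const Var) (φ ψ : Fm Ag Const Var Atom),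
      φ.imp ψ ∈ canEO CS χ i X t → φ ∈ canEO CS χ i X s →
        ψ ∈ canEO CS χ i X (TmO.times t s)) ∧
    -- canonical E^O_i : consistency
    (∀ i : Ag, ∀ X ∈ MCSx CS χ, ∀ (t : TmO Const Var) (φ : Fm Ag Const Var Atom),
      φ ∈ canEO CS χ i X t → Fm.neg φ ∉ canEO CS χ i X t) ∧
    -- canonical E^O_i : obligated factivity
    (∀ i : Ag, ∀ X ∈ MCSx CS χ, ∀ (t : TmO Const Var) (φ : Fm Ag Const Var Atom),
      (Fm.obox i t φ).imp φ ∈ canEO CS χ i X (TmO.ddag t)) := by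
  refine ⟨?_, ?_, ?_, ?_, ?_, ?_, ?_, ?_, ?_, ?_, ?_⟩
  · -- reflexivity of canK
    intro i X _ Δ hΔ hXΔ
    refine ⟨Δ, hΔ, hXΔ, ?_⟩
    rintro φ ⟨t, ht⟩
    exact mcs_mp hΔ (mcs_ax hΔ (IsAxiom.fact i t φ)) ht
  · -- transitivity of canK
    intro i X _ Y _ Z _ hXY hYZ Δ hΔ hZΔ
    obtain ⟨Γ', hΓ', hY, hsub'⟩ := hYZ Δ hΔ hZΔ
    obtain ⟨Γ, hΓ, hX, hsub⟩ := hXY Γ' hΓ' hY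
    refine ⟨Γ, hΓ, hX, ?_⟩
    rintro φ ⟨t, ht⟩
    have h1 : Fm.jbox i (TmE.bang t) (Fm.jbox i t φ) ∈ Γ :=
      mcs_mp hΓ (mcs_ax hΓ (IsAxiom.pos i t φ)) ht
    exact hsub' ⟨t, hsub ⟨TmE.bang t, h1⟩⟩
  · -- shift reflexivity of canKO
    intro i X _ Y _ hXY
    obtain ⟨Γ, hΓ, Δ, hΔ, _, hY, hsub⟩ := hXY
    refine ⟨Δ, hΔ, Δ, hΔ, hY, hY, ?_⟩
    rintro φ ⟨t, ht⟩
    have h1 : Fm.obox i (TmO.ddag t) ((Fm.obox i t φ).imp φ) ∈ Γ :=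
      mcs_ax hΓ (IsAxiom.ofact i t φ)
    exact mcs_mp hΔ (hsub ⟨TmO.ddag t, h1⟩) ht
  · -- monotonicity of canE
    intro i X _ Y _ t hK φ hφ Δ hΔ hYΔ
    obtain ⟨Γ, hΓ, hX, hsub⟩ := hK Δ hΔ hYΔ
    have h1 : Fm.jbox i t φ ∈ Γ := hφ Γ hΓ hX
    have h2 : Fm.jbox i (TmE.bang t) (Fm.jbox i t φ) ∈ Γ :=
      mcs_mp hΓ (mcs_ax hΓ (IsAxiom.pos i t φ)) h1
    exact hsub ⟨TmE.bang t, h2⟩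
  · -- canE constant specification
    intro i t φ hcs X _ Γ hΓ _
    exact mcs_deriv hΓ (Deriv.csax hcs.1)
  · -- canE application
    intro i X _ t s φ ψ h1 h2 Γ hΓ hX
    exact mcs_mp hΓ (mcs_mp hΓ (mcs_ax hΓ (IsAxiom.app i t s φ ψ)) (h1 Γ hΓ hX)) (h2 Γ hΓ hX)
  · -- canE positive introspection
    intro i X _ t φ h Γ hΓ hX
    exact mcs_mp hΓ (mcs_ax hΓ (IsAxiom.pos i t φ)) (h Γ hΓ hX)
  · -- canEO constant specification
    intro i t φ hcs X _ Γ hΓ _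
    exact mcs_deriv hΓ (Deriv.csax hcs.1)
  · -- canEO application
    intro i X _ t s φ ψ h1 h2 Γ hΓ hX
    exact mcs_mp hΓ (mcs_mp hΓ (mcs_ax hΓ (IsAxiom.appO i t s φ ψ)) (h1 Γ hΓ hX)) (h2 Γ hΓ hX)
  · -- canEO consistency
    intro i X hX t φ hφ hnφ
    obtain ⟨Γ, hΓ, hrep⟩ := mcsx_rep hX
    have h1 : Fm.obox i t φ ∈ Γ := hφ Γ hΓ hrep
    have h2 : Fm.obox i t (Fm.neg φ) ∈ Γ := hnφ Γ hΓ hrep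
    have hnoc : (Fm.obox i t φ).imp (Fm.pbox i t φ) ∈ Γ := mcs_ax hΓ (IsAxiom.noc i t φ)
    have hp : (Fm.obox i t (Fm.neg φ)).imp Fm.bot ∈ Γ := mcs_mp hΓ hnoc h1
    have hbot : Fm.bot ∈ Γ := mcs_mp hΓ hp h2
    exact hΓ.1 (mem_derivFrom hbot)
  · -- canEO obligated factivity
    intro i X _ t φ Γ hΓ _
    exact mcs_ax hΓ (IsAxiom.ofact i t φ)

end JTO
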